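/- (Compatibility as a block matrix identity.) For each α ∈ ℕ, the discrete non-commutative hungry Toda-II lattice equations with zero boundary conditions hold at step α if and only if the np×np matrix identity R_n^{(α)}·L_n^{(α)} = L_n^{(α+θ)}·R_n^{(α+1)} holds. -/

import Mathlib

open Matrix Filter

/-- The block upper bidiagonal matrix `R_n^{(α)}`: diagonal blocks
`q_1^{(α)}, …, q_n^{(α)}`, superdiagonal blocks `I_p`, zero elsewhere,
realized as an `np × np` real matrix indexed by `Fin n × Fin p`. -/
def blkR (p n : ℕ) (q : ℕ → ℕ → Matrix (Fin p) (Fin p) ℝ) (α : ℕ) :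
    Matrix (Fin n × Fin p) (Fin n × Fin p) ℝ :=
  Matrix.of fun u v =>
    if u.1 = v.1 then q ((u.1 : ℕ) + 1) α u.2 v.2
    else if (v.1 : ℕ) = (u.1 : ℕ) + 1 then (if u.2 = v.2 then 1 else 0) else 0

/-- The block lower bidiagonal matrix `L_n^{(α)}`: diagonal blocks `I_p`,
subdiagonal blocks `e_1^{(α)}, …, e_{n-1}^{(α)}`, zero elsewhere. -/
def blkL (p n : ℕ) (e : ℕ → ℕ → Matrix (Fin p) (Fin p) ℝ) (α : ℕ) :
    Matrix (Fin n × Fin p) (Fin n × Fin p) ℝ :=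
  Matrix.of fun u v =>
    if u.1 = v.1 then (if u.2 = v.2 then 1 else 0)
    else if (u.1 : ℕ) = (v.1 : ℕ) + 1 then e (u.1 : ℕ) α u.2 v.2 else 0

/-- The discrete non-commutative hungry Toda-II lattice with zero boundary
conditions, at time step `α`. -/
def TodaStep (p θ : ℕ) (q e : ℕ → ℕ → Matrix (Fin p) (Fin p) ℝ) (n α : ℕ) : Prop :=
  (∀ m : ℕ, 1 ≤ m → m ≤ n → q m (α + 1) + e (m - 1) (α + θ) = q m α + e m α) ∧
  (∀ m : ℕ, 1 ≤ m → m ≤ n - 1 → e m (α + θ) * q m (α + 1) = q (m + 1) α * e m α)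

/-- The block Hessenberg matrix
`J_n^{(α)} = L_n^{(α)} · L_n^{(α+1)} ⋯ L_n^{(α+θ-1)} · R_n^{(α)}`. -/
def blkJ (p n θ : ℕ) (q e : ℕ → ℕ → Matrix (Fin p) (Fin p) ℝ) (α : ℕ) :
    Matrix (Fin n × Fin p) (Fin n × Fin p) ℝ :=
  ((List.range θ).map fun i => blkL p n e (α + i)).prod * blkR p n q α

namespace St14

variable (p n : ℕ)

def Dm (f : ℕ → Matrix (Fin p) (Fin p) ℝ) : Matrix (Fin n × Fin p) (Fin n × Fin p) ℝ :=
  Matrix.of fun u v => if u.1 = v.1 then f ((u.1 : ℕ) + 1) u.2 v.2 else 0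

def Sm : Matrix (Fin n × Fin p) (Fin n × Fin p) ℝ :=
  Matrix.of fun u v =>
    if (v.1 : ℕ) = (u.1 : ℕ) + 1 then (if u.2 = v.2 then (1 : ℝ) else 0) else 0

def Em (g : ℕ → Matrix (Fin p) (Fin p) ℝ) : Matrix (Fin n × Fin p) (Fin n × Fin p) ℝ :=
  Matrix.of fun u v => if (u.1 : ℕ) = (v.1 : ℕ) + 1 then g (u.1 : ℕ) u.2 v.2 else 0

lemma Dm_mul_Em (f g : ℕ → Matrix (Fin p) (Fin p) ℝ) :
    Dm p n f * Em p n g = Matrix.of (fun u v =>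
      if (u.1 : ℕ) = (v.1 : ℕ) + 1 then (f ((u.1 : ℕ) + 1) * g (u.1 : ℕ)) u.2 v.2 else 0) := by
  ext ⟨i, a⟩ ⟨k, b⟩
  rw [Matrix.mul_apply, Fintype.sum_prod_type]
  rw [Finset.sum_eq_single i]
  · by_cases h : (i : ℕ) = (k : ℕ) + 1 <;> simp [Dm, Em, h, Matrix.mul_apply]
  · intro j _ hj
    refine Finset.sum_eq_zero fun c _ => ?_
    simp [Dm, (Ne.symm hj)]
  · simp

lemma Em_mul_Dm (g f : ℕ → Matrix (Fin p) (Fin p) ℝ) :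
    Em p n g * Dm p n f = Matrix.of (fun u v =>
      if (u.1 : ℕ) = (v.1 : ℕ) + 1 then (g (u.1 : ℕ) * f (u.1 : ℕ)) u.2 v.2 else 0) := by
  ext ⟨i, a⟩ ⟨k, b⟩
  rw [Matrix.mul_apply, Fintype.sum_prod_type]
  rw [Finset.sum_eq_single k]
  · by_cases h : (i : ℕ) = (k : ℕ) + 1 <;>
      simp [Dm, Em, h, Matrix.mul_apply]
  · intro j _ hj
    refine Finset.sum_eq_zero fun c _ => ?_
    simp [Dm, hj]
  · simp

lemma Sm_mul_Em (g : ℕ → Matrix (Fin p) (Fin p) ℝ) (hg : g n = 0) :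
    Sm p n * Em p n g = Matrix.of (fun u v =>
      if u.1 = v.1 then g ((u.1 : ℕ) + 1) u.2 v.2 else 0) := by
  ext ⟨i, a⟩ ⟨k, b⟩
  rw [Matrix.mul_apply, Fintype.sum_prod_type]
  by_cases hi : (i : ℕ) + 1 < n
  · rw [Finset.sum_eq_single ⟨(i : ℕ) + 1, hi⟩]
    · simp only [Sm, Em, Matrix.of_apply, Fin.val_mk, if_pos rfl]
      by_cases hk : i = k
      · subst hk
        simp [ite_mul, one_mul, zero_mul]
      · have h2 : ¬ ((i : ℕ) + 1 = (k : ℕ) + 1) := fun hc => hk (Fin.ext (by omega))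
        simp [h2, hk]
        exact fun hc => absurd (Fin.ext hc) hk
    · intro j _ hj
      have : ¬ ((j : ℕ) = (i : ℕ) + 1) := fun hc => hj (Fin.ext (by simp [hc]))
      refine Finset.sum_eq_zero fun c _ => ?_
      simp [Sm, this]
    · simp
  · have h0 : ∀ j : Fin n, ¬ ((j : ℕ) = (i : ℕ) + 1) := fun j hc => by
      have := j.isLt; omega
    rw [Finset.sum_eq_zero (fun j _ => Finset.sum_eq_zero fun c _ => by simp [Sm, h0 j])]
    have hin : (i : ℕ) + 1 = n := by have := i.isLt; omega
    simp only [Matrix.of_apply]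
    split_ifs <;> simp [hin, hg]

lemma Em_mul_Sm (g : ℕ → Matrix (Fin p) (Fin p) ℝ) (hg : g 0 = 0) :
    Em p n g * Sm p n = Matrix.of (fun u v =>
      if u.1 = v.1 then g (u.1 : ℕ) u.2 v.2 else 0) := by
  ext ⟨i, a⟩ ⟨k, b⟩
  rw [Matrix.mul_apply, Fintype.sum_prod_type]
  by_cases hi : 1 ≤ (i : ℕ)
  · have hlt : (i : ℕ) - 1 < n := by have := i.isLt; omega
    rw [Finset.sum_eq_single ⟨(i : ℕ) - 1, hlt⟩]
    · simp only [Em, Sm, Matrix.of_apply, Fin.val_mk]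
      have h1 : (i : ℕ) = (i : ℕ) - 1 + 1 := by omega
      simp only [← h1]
      by_cases hk : (k : ℕ) = (i : ℕ)
      · have hik : i = k := Fin.ext hk.symm
        simp [hk, hik, mul_ite, mul_zero]
      · have h3 : ¬ (i = k) := fun hik => hk (by rw [hik])
        simp [hk, h3]
    · intro j _ hj
      have : ¬ ((i : ℕ) = (j : ℕ) + 1) := fun hc => hj (Fin.ext (by simp; omega))
      refine Finset.sum_eq_zero fun c _ => ?_
      simp [Em, this]
    · simp
  · have hi0 : (i : ℕ) = 0 := by omega
    have h0 : ∀ j : Fin n, ¬ ((i : ℕ) = (j : ℕ) + 1) := fun j hc => by omega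
    rw [Finset.sum_eq_zero (fun j _ => Finset.sum_eq_zero fun c _ => by simp [Em, h0 j])]
    simp only [Matrix.of_apply]
    split_ifs <;> simp [hi0, hg]

lemma blkR_eq (q : ℕ → ℕ → Matrix (Fin p) (Fin p) ℝ) (α : ℕ) :
    blkR p n q α = Dm p n (fun m => q m α) + Sm p n := by
  ext ⟨i, a⟩ ⟨k, b⟩
  simp only [blkR, Dm, Sm, Matrix.add_apply, Matrix.of_apply]
  split_ifs with h1 h2 <;> first
    | rfl
    | (exfalso; omega)
    | simp_all
    | (subst h1; omega)
    | simp

lemma blkL_eq (e : ℕ → ℕ → Matrix (Fin p) (Fin p) ℝ) (α : ℕ) :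
    blkL p n e α = 1 + Em p n (fun m => e m α) := by
  ext ⟨i, a⟩ ⟨k, b⟩
  simp only [blkL, Em, Matrix.add_apply, Matrix.of_apply, Matrix.one_apply, Prod.mk.injEq]
  split_ifs with h1 h2 <;> first
    | rfl
    | (exfalso; omega)
    | simp_all
    | (subst h1; omega)
    | simp

lemma key (f f' g g' : ℕ → Matrix (Fin p) (Fin p) ℝ) (hg : g n = 0) (hg' : g' 0 = 0) :
    (Dm p n f + Sm p n) * (1 + Em p n g) = (1 + Em p n g') * (Dm p n f' + Sm p n) ↔
      ((∀ i : Fin n, f ((i : ℕ) + 1) + g ((i : ℕ) + 1) = f' ((i : ℕ) + 1) + g' (i : ℕ)) ∧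
       (∀ i : Fin n, 1 ≤ (i : ℕ) → f ((i : ℕ) + 1) * g (i : ℕ) = g' (i : ℕ) * f' (i : ℕ))) := by
  have hL : (Dm p n f + Sm p n) * (1 + Em p n g) =
      Sm p n + Matrix.of (fun u v =>
        if u.1 = v.1 then (f ((u.1 : ℕ) + 1) + g ((u.1 : ℕ) + 1)) u.2 v.2
        else if (u.1 : ℕ) = (v.1 : ℕ) + 1 then (f ((u.1 : ℕ) + 1) * g (u.1 : ℕ)) u.2 v.2
        else 0) := by
    have expand : (Dm p n f + Sm p n) * (1 + Em p n g) =
        Sm p n + (Dm p n f + (Dm p n f * Em p n g + Sm p n * Em p n g)) := by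
      noncomm_ring
    rw [expand, Dm_mul_Em, Sm_mul_Em p n g hg]
    congr 1
    ext ⟨i, a⟩ ⟨k, b⟩
    by_cases h : i = k
    · have hv : ¬ ((i : ℕ) = (k : ℕ) + 1) := by subst h; omega
      simp [Dm, h, hv]
    · simp [Dm, h]
  have hR : (1 + Em p n g') * (Dm p n f' + Sm p n) =
      Sm p n + Matrix.of (fun u v =>
        if u.1 = v.1 then (f' ((u.1 : ℕ) + 1) + g' (u.1 : ℕ)) u.2 v.2
        else if (u.1 : ℕ) = (v.1 : ℕ) + 1 then (g' (u.1 : ℕ) * f' (u.1 : ℕ)) u.2 v.2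
        else 0) := by
    have expand : (1 + Em p n g') * (Dm p n f' + Sm p n) =
        Sm p n + (Dm p n f' + (Em p n g' * Dm p n f' + Em p n g' * Sm p n)) := by
      noncomm_ring
    rw [expand, Em_mul_Dm, Em_mul_Sm p n g' hg']
    congr 1
    ext ⟨i, a⟩ ⟨k, b⟩
    by_cases h : i = k
    · have hv : ¬ ((i : ℕ) = (k : ℕ) + 1) := by subst h; omega
      simp [Dm, h, hv, add_comm]
    · simp [Dm, h]
  rw [hL, hR, add_right_inj]
  constructor
  · intro h
    constructor
    · intro i
      ext a b
      have := congrFun (congrFun h (i, a)) (i, b)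
      simpa using this
    · intro i hi
      have hlt : (i : ℕ) - 1 < n := lt_of_le_of_lt (Nat.sub_le _ _) i.isLt
      have hik : ¬ (i = (⟨(i : ℕ) - 1, hlt⟩ : Fin n)) := by
        intro hc
        have := congrArg Fin.val hc
        simp only [Fin.val_mk] at this
        omega
      have hv : (i : ℕ) = ((⟨(i : ℕ) - 1, hlt⟩ : Fin n) : ℕ) + 1 := by
        simp only [Fin.val_mk]; omega
      ext a b
      have := congrFun (congrFun h (i, a)) ((⟨(i : ℕ) - 1, hlt⟩ : Fin n), b)
      simp only [Matrix.of_apply, if_neg hik, if_pos hv, Fin.val_mk] at this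
      exact this
  · rintro ⟨h1, h2⟩
    ext ⟨i, a⟩ ⟨k, b⟩
    simp only [Matrix.of_apply]
    by_cases h : i = k
    · subst h
      rw [if_pos rfl, if_pos rfl, h1 i]
    · rw [if_neg h, if_neg h]
      by_cases hv : (i : ℕ) = (k : ℕ) + 1
      · rw [if_pos hv, if_pos hv, h2 i (by omega)]
      · rw [if_neg hv, if_neg hv]

end St14


/-- the hungry Toda-II lattice equations with zero boundary
conditions at step `α` hold iff `R_n^{(α)}·L_n^{(α)} = L_n^{(α+θ)}·R_n^{(α+1)}`. -/
theorem statement14 (p n θ : ℕ) (hp : 1 ≤ p) (hn : 1 ≤ n) (hθ : 1 ≤ θ)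
    (q e : ℕ → ℕ → Matrix (Fin p) (Fin p) ℝ)
    (hbd : ∀ α : ℕ, e 0 α = 0 ∧ e n α = 0)
    (α : ℕ) :
    TodaStep p θ q e n α ↔
      blkR p n q α * blkL p n e α = blkL p n e (α + θ) * blkR p n q (α + 1) := by
  have hg : (fun m => e m α) n = 0 := (hbd α).2
  have hg' : (fun m => e m (α + θ)) 0 = 0 := (hbd (α + θ)).1
  have hmat : (blkR p n q α * blkL p n e α = blkL p n e (α + θ) * blkR p n q (α + 1)) ↔
      ((∀ i : Fin n, (fun m => q m α) ((i : ℕ) + 1) + (fun m => e m α) ((i : ℕ) + 1) =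
          (fun m => q m (α + 1)) ((i : ℕ) + 1) + (fun m => e m (α + θ)) (i : ℕ)) ∧
       (∀ i : Fin n, 1 ≤ (i : ℕ) →
          (fun m => q m α) ((i : ℕ) + 1) * (fun m => e m α) (i : ℕ) =
          (fun m => e m (α + θ)) (i : ℕ) * (fun m => q m (α + 1)) (i : ℕ))) := by
    rw [St14.blkR_eq p n q α, St14.blkR_eq p n q (α + 1), St14.blkL_eq p n e α,
      St14.blkL_eq p n e (α + θ)]
    exact St14.key p n _ _ _ _ hg hg'
  rw [hmat]
  constructor
  · rintro ⟨h1, h2⟩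
    constructor
    · intro i
      have := h1 ((i : ℕ) + 1) (by omega) (by have := i.isLt; omega)
      simp only [Nat.add_sub_cancel] at this
      exact this.symm
    · intro i hi
      have := h2 (i : ℕ) hi (by have := i.isLt; omega)
      exact this.symm
  · rintro ⟨h1, h2⟩
    constructor
    · intro m hm1 hmn
      have hlt : m - 1 < n := by omega
      have := h1 ⟨m - 1, hlt⟩
      simp only [Fin.val_mk] at this
      rw [show m - 1 + 1 = m by omega] at this
      exact this.symm
    · intro m hm1 hm2
      have hlt : m < n := by omega
      have := h2 ⟨m, hlt⟩ (by simpa using hm1)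
      simp only [Fin.val_mk] at this
      exact this.symm
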